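/- arXiv:0705.3397 — 5 statements merged into one kernel-verified Lean document; each statement's English description precedes it below -/
import Mathlib

section
/- Let t_p > 0 and h, h_i be real numbers with 1 + h > 0 and 4 h_i t_p > (1+h)^2, set a = (1+h)/(2 t_p) > 0, b = (1/(2 t_p))·√(4 h_i t_p − (1+h)^2) > 0, and y(t) = e^{−a(t−1)}(cos(b(t−1)) + (a/b)·sin(b(t−1))). Then for all t ≥ 1 one has y(t) ≥ −e^{−π a/b}, with equality at t = 1 + π/b. In particular the overshoot of the controlled variable is PO_y = e^{−π a/b}. -/
open Real

private lemma f_deriv (r : ℝ) (s : ℝ) :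
    HasDerivAt (fun s => Real.exp (-r * s) * (Real.cos s + r * Real.sin s))
      (-(1 + r ^ 2) * Real.exp (-r * s) * Real.sin s) s := by
  have h0 : HasDerivAt (fun s : ℝ => -r * s) (-r) s := by
    simpa using (hasDerivAt_id s).const_mul (-r)
  have h1 : HasDerivAt (fun s : ℝ => Real.exp (-r * s)) (Real.exp (-r * s) * (-r)) s := h0.exp
  have h2 : HasDerivAt (fun s : ℝ => Real.cos s + r * Real.sin s)
      (-Real.sin s + r * Real.cos s) s :=
    (Real.hasDerivAt_cos s).add ((Real.hasDerivAt_sin s).const_mul r)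
  have := h1.mul h2
  convert this using 1 <;> first | rfl | ring

private lemma f_min (r : ℝ) (hr : 0 < r) :
    ∀ s : ℝ, 0 ≤ s →
      Real.exp (-r * s) * (Real.cos s + r * Real.sin s) ≥ -Real.exp (-r * π) := by
  set f : ℝ → ℝ := fun s => Real.exp (-r * s) * (Real.cos s + r * Real.sin s) with hf
  have hfpi : f π = -Real.exp (-r * π) := by
    simp [hf, Real.cos_pi, Real.sin_pi]
  have hcont : Continuous f := by
    fun_prop
  have hanti : AntitoneOn f (Set.Icc 0 π) := by
    apply antitoneOn_of_deriv_nonpos (convex_Icc 0 π) hcont.continuousOn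
    · intro x hx
      exact (f_deriv r x).differentiableAt.differentiableWithinAt
    · intro x hx
      rw [interior_Icc] at hx
      rw [(f_deriv r x).deriv]
      have hs : 0 ≤ Real.sin x := Real.sin_nonneg_of_nonneg_of_le_pi hx.1.le hx.2.le
      have he : 0 < Real.exp (-r * x) := Real.exp_pos _
      have hq : (0:ℝ) ≤ 1 + r ^ 2 := by positivity
      nlinarith [mul_nonneg (mul_nonneg hq he.le) hs]
  have hmono : MonotoneOn f (Set.Icc π (2 * π)) := by
    apply monotoneOn_of_deriv_nonneg (convex_Icc π (2 * π)) hcont.continuousOn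
    · intro x hx
      exact (f_deriv r x).differentiableAt.differentiableWithinAt
    · intro x hx
      rw [interior_Icc] at hx
      rw [(f_deriv r x).deriv]
      have hs : Real.sin x ≤ 0 := by
        have h0 : 0 ≤ Real.sin (x - π) := by
          apply Real.sin_nonneg_of_nonneg_of_le_pi <;> [linarith [hx.1]; linarith [hx.2]]
        rw [Real.sin_sub_pi] at h0
        linarith
      have he : 0 < Real.exp (-r * x) := Real.exp_pos _
      have hq : (0:ℝ) ≤ 1 + r ^ 2 := by positivity
      nlinarith [mul_nonneg (mul_nonneg hq he.le) (neg_nonneg.2 hs)]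
  intro s hs
  rcases le_or_gt s π with h1 | h1
  · have := hanti (Set.mem_Icc.2 ⟨hs, h1⟩) (Set.mem_Icc.2 ⟨Real.pi_nonneg, le_refl π⟩) h1
    rw [hfpi] at this
    exact this
  rcases le_or_gt s (2 * π) with h2 | h2
  · have := hmono (Set.mem_Icc.2 ⟨le_refl π, by linarith [Real.pi_pos]⟩)
      (Set.mem_Icc.2 ⟨h1.le, h2⟩) h1.le
    rw [hfpi] at this
    exact this
  · -- tail : s > 2π
    have hcos : -1 ≤ Real.cos s := Real.neg_one_le_cos s
    have hsin : -1 ≤ Real.sin s := Real.neg_one_le_sin s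
    have hlow : -(1 + r) ≤ Real.cos s + r * Real.sin s := by nlinarith
    have he : 0 < Real.exp (-r * s) := Real.exp_pos _
    have hstep : f s ≥ Real.exp (-r * s) * (-(1 + r)) := by
      have := mul_le_mul_of_nonneg_left hlow he.le
      simpa [hf] using this
    have hkey : Real.exp (-r * s) * (1 + r) ≤ Real.exp (-r * π) := by
      have h1r : 1 + r ≤ Real.exp (π * r) := by
        have := Real.add_one_le_exp (π * r)
        nlinarith [Real.pi_gt_three, hr.le]
      have hes : Real.exp (-r * s) ≤ Real.exp (-r * (2 * π)) := by
        apply Real.exp_le_exp.2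
        nlinarith
      calc Real.exp (-r * s) * (1 + r)
          ≤ Real.exp (-r * (2 * π)) * Real.exp (π * r) := by
            apply mul_le_mul hes h1r (by linarith) (Real.exp_pos _).le
        _ = Real.exp (-r * π) := by rw [← Real.exp_add]; ring_nf
    nlinarith [hstep]

/-- Overshoot of the controlled variable of the underdamped Smith Predictor:
for `t ≥ 1`, `y(t) ≥ −e^{−πa/b}`, with equality at `t = 1 + π/b`,
so `PO_y = e^{−πa/b}`. -/
theorem stmt4 (t_p h h_i a b : ℝ) (y : ℝ → ℝ)
    (htp : 0 < t_p) (hh : 1 + h > 0) (hub : 4 * h_i * t_p > (1 + h) ^ 2)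
    (ha : a = (1 + h) / (2 * t_p))
    (hb : b = (1 / (2 * t_p)) * Real.sqrt (4 * h_i * t_p - (1 + h) ^ 2))
    (hy : ∀ t : ℝ, y t =
      Real.exp (-a * (t - 1)) * (Real.cos (b * (t - 1)) + (a / b) * Real.sin (b * (t - 1)))) :
    (∀ t : ℝ, 1 ≤ t → y t ≥ -Real.exp (-π * a / b)) ∧
      y (1 + π / b) = -Real.exp (-π * a / b) := by
  have ha0 : 0 < a := by rw [ha]; positivity
  have hb0 : 0 < b := by
    rw [hb]
    have : 0 < Real.sqrt (4 * h_i * t_p - (1 + h) ^ 2) :=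
      Real.sqrt_pos.2 (by linarith)
    positivity
  have hr0 : 0 < a / b := div_pos ha0 hb0
  have hab : a = (a / b) * b := by field_simp
  constructor
  · intro t ht
    rw [hy t]
    have hs0 : 0 ≤ b * (t - 1) := by nlinarith
    have := f_min (a / b) hr0 (b * (t - 1)) hs0
    have harg : -(a / b) * (b * (t - 1)) = -a * (t - 1) := by field_simp
    rw [harg] at this
    have hexp : -(a / b) * π = -π * a / b := by ring
    rw [hexp] at this
    exact this
  · rw [hy]
    have h1 : b * (1 + π / b - 1) = π := by field_simp; ring
    rw [h1]
    have h2 : -a * (1 + π / b - 1) = -π * a / b := by ring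
    rw [h2]
    simp [Real.cos_pi, Real.sin_pi]
end

section
/- Let t_p > 0 and h, h_i be real numbers with 1 + h > 0 and 4 h_i t_p > (1+h)^2, set a = (1+h)/(2 t_p) > 0, b = (1/(2 t_p))·√(4 h_i t_p − (1+h)^2) > 0, y(t) = e^{−a(t−1)}(cos(b(t−1)) + (a/b)·sin(b(t−1))), and v(t) = y(t) + t_p·y'(t). Let φ be the unique number in (0, π) satisfying t_p·b·cos φ = (a·t_p − 1)·sin φ (equivalently, φ is the first positive root of tan φ = b·t_p/(a·t_p − 1), with φ = π/2 when a·t_p = 1). Then v(1 + φ/b) = −e^{−φ a/b}·√(1 − 2 a t_p + t_p^2(a^2+b^2)), v'(1 + φ/b) = 0, and v(t) ≥ −e^{−φ a/b}·√(1 − 2 a t_p + t_p^2(a^2+b^2)) for all t ≥ 1. In particular the controller-output overshoot is PO_v = e^{−φ a/b}·√(1 − 2 a t_p + t_p^2(a^2+b^2)). -/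
open Real

lemma aux_deriv (a b k : ℝ) (t : ℝ) :
    HasDerivAt (fun t => Real.exp (-a*(t-1)) * (Real.cos (b*(t-1)) + k * Real.sin (b*(t-1))))
      (Real.exp (-a*(t-1)) * ((b*k - a) * Real.cos (b*(t-1)) + (-b - a*k) * Real.sin (b*(t-1)))) t := by
  have h1 : HasDerivAt (fun t : ℝ => -a*(t-1)) (-a) t := by
    simpa using (((hasDerivAt_id t).sub_const 1).const_mul (-a))
  have h2 : HasDerivAt (fun t : ℝ => b*(t-1)) b t := by
    simpa using (((hasDerivAt_id t).sub_const 1).const_mul b)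
  have hE : HasDerivAt (fun t : ℝ => Real.exp (-a*(t-1))) (Real.exp (-a*(t-1)) * (-a)) t := h1.exp
  have hC : HasDerivAt (fun t : ℝ => Real.cos (b*(t-1))) (-Real.sin (b*(t-1)) * b) t := h2.cos
  have hS : HasDerivAt (fun t : ℝ => Real.sin (b*(t-1))) (Real.cos (b*(t-1)) * b) t := h2.sin
  have hd := hE.mul (hC.add (hS.const_mul k))
  have heq : Real.exp (-a*(t-1)) * ((b*k - a) * Real.cos (b*(t-1)) + (-b - a*k) * Real.sin (b*(t-1)))
      = Real.exp (-a*(t-1)) * (-a) * (Real.cos (b*(t-1)) + k * Real.sin (b*(t-1)))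
        + Real.exp (-a*(t-1)) * (-Real.sin (b*(t-1)) * b + k * (Real.cos (b*(t-1)) * b)) := by ring
  rw [heq]
  exact hd

lemma key_ineq (a b : ℝ) (ha : 0 < a) (hb : 0 < b) (u : ℝ) (hu : -π ≤ u) :
    Real.exp (-(a/b) * u) * (a * Real.sin u + b * Real.cos u) ≤ b := by
  have hb' : b ≠ 0 := ne_of_gt hb
  set g : ℝ → ℝ := fun u => Real.exp (-(a/b) * u) * (a * Real.sin u + b * Real.cos u) with hg_def
  have hg : ∀ x : ℝ, HasDerivAt g (-((a^2+b^2)/b) * (Real.exp (-(a/b)*x) * Real.sin x)) x := by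
    intro x
    have h1 : HasDerivAt (fun u : ℝ => -(a/b) * u) (-(a/b)) x := by
      simpa using (hasDerivAt_id x).const_mul (-(a/b))
    have hE := h1.exp
    have h2 := ((Real.hasDerivAt_sin x).const_mul a).add ((Real.hasDerivAt_cos x).const_mul b)
    have hd := hE.mul h2
    have heq : -((a^2+b^2)/b) * (Real.exp (-(a/b)*x) * Real.sin x)
        = Real.exp (-(a/b)*x) * (-(a/b)) * (a * Real.sin x + b * Real.cos x)
          + Real.exp (-(a/b)*x) * (a * Real.cos x + b * -Real.sin x) := by
      field_simp
      ring
    rw [hg_def]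
    rw [heq]
    exact hd
  have hg0 : g 0 = b := by simp [hg_def]
  have hdg : ∀ x : ℝ, deriv g x = -((a^2+b^2)/b) * (Real.exp (-(a/b)*x) * Real.sin x) :=
    fun x => (hg x).deriv
  rcases le_or_gt u π with hle | hlt
  · rcases le_or_gt u 0 with h0 | h0
    · -- monotone on [-π, 0]
      have mono : MonotoneOn g (Set.Icc (-π) 0) := by
        apply monotoneOn_of_deriv_nonneg (convex_Icc _ _)
        · exact fun x _ => ((hg x).differentiableAt.continuousAt).continuousWithinAt
        · exact fun x _ => (hg x).differentiableAt.differentiableWithinAt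
        · intro x hx
          rw [interior_Icc] at hx
          rw [hdg x]
          have hs : Real.sin x ≤ 0 :=
            Real.sin_nonpos_of_nonpos_of_neg_pi_le (le_of_lt hx.2) (le_of_lt hx.1)
          have h3 : 0 < (a^2+b^2)/b := by positivity
          nlinarith [Real.exp_pos (-(a/b)*x), mul_pos h3 (Real.exp_pos (-(a/b)*x))]
      have := mono (Set.mem_Icc.2 ⟨hu, h0⟩)
        (Set.mem_Icc.2 ⟨by linarith [Real.pi_pos], le_refl 0⟩) h0
      rw [hg0] at this
      exact this
    · -- antitone on [0, π]
      have anti : AntitoneOn g (Set.Icc 0 π) := by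
        apply antitoneOn_of_deriv_nonpos (convex_Icc _ _)
        · exact fun x _ => ((hg x).differentiableAt.continuousAt).continuousWithinAt
        · exact fun x _ => (hg x).differentiableAt.differentiableWithinAt
        · intro x hx
          rw [interior_Icc] at hx
          rw [hdg x]
          have hs : 0 ≤ Real.sin x := le_of_lt (Real.sin_pos_of_pos_of_lt_pi hx.1 hx.2)
          have h3 : 0 < (a^2+b^2)/b := by positivity
          nlinarith [Real.exp_pos (-(a/b)*x), mul_pos h3 (Real.exp_pos (-(a/b)*x))]
      have := anti (Set.mem_Icc.2 ⟨le_refl 0, by linarith [Real.pi_pos]⟩)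
        (Set.mem_Icc.2 ⟨le_of_lt h0, hle⟩) (le_of_lt h0)
      rw [hg0] at this
      exact this
  · -- u > π
    have hA : a * Real.sin u + b * Real.cos u ≤ a + b := by
      nlinarith [Real.sin_le_one u, Real.cos_le_one u]
    have hr : 0 < a / b := div_pos ha hb
    have hE1 : Real.exp (-(a/b) * u) ≤ Real.exp (-(a/b) * π) :=
      Real.exp_le_exp.2 (by nlinarith)
    have hE2 : Real.exp (-(a/b) * π) * (a + b) ≤ b := by
      have hπ : (1:ℝ) ≤ π := by linarith [Real.pi_gt_three]
      have h1 : a + b ≤ Real.exp ((a/b) * π) * b := by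
        have h2 := Real.add_one_le_exp ((a/b) * π)
        have h3 : 1 + a/b ≤ Real.exp ((a/b) * π) := by nlinarith
        have h4 : (1 + a/b) * b ≤ Real.exp ((a/b) * π) * b :=
          mul_le_mul_of_nonneg_right h3 (le_of_lt hb)
        calc a + b = (1 + a/b) * b := by field_simp; ring
          _ ≤ _ := h4
      rw [show -(a/b) * π = -((a/b) * π) by ring, Real.exp_neg, inv_mul_le_iff₀ (Real.exp_pos _)]
      exact h1
    have hEpos := Real.exp_pos (-(a/b) * u)
    have hEpos2 := Real.exp_pos (-(a/b) * π)
    calc g u ≤ Real.exp (-(a/b) * u) * (a + b) := by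
          exact mul_le_mul_of_nonneg_left hA (le_of_lt hEpos)
      _ ≤ Real.exp (-(a/b) * π) * (a + b) := by
          exact mul_le_mul_of_nonneg_right hE1 (by linarith)
      _ ≤ b := hE2

/-- Overshoot of the controller output of the underdamped Smith Predictor:
`φ` is the unique number in `(0, π)` with `t_p·b·cos φ = (a·t_p − 1)·sin φ`
(i.e. the first positive root of `tan φ = b t_p/(a t_p − 1)`), and
`v(1+φ/b) = −e^{−φa/b}·√(1 − 2 a t_p + t_p²(a²+b²))`, `v'(1+φ/b) = 0`, and
`v(t) ≥ −e^{−φa/b}·√(1 − 2 a t_p + t_p²(a²+b²))` for all `t ≥ 1`; hence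
`PO_v = e^{−φa/b}·√(1 − 2 a t_p + t_p²(a²+b²))`. -/
theorem stmt5 (t_p h h_i a b φ : ℝ) (y v : ℝ → ℝ)
    (htp : 0 < t_p) (hh : 1 + h > 0) (hub : 4 * h_i * t_p > (1 + h) ^ 2)
    (ha : a = (1 + h) / (2 * t_p))
    (hb : b = (1 / (2 * t_p)) * Real.sqrt (4 * h_i * t_p - (1 + h) ^ 2))
    (hy : ∀ t : ℝ, y t =
      Real.exp (-a * (t - 1)) * (Real.cos (b * (t - 1)) + (a / b) * Real.sin (b * (t - 1))))
    (hv : ∀ t : ℝ, v t = y t + t_p * deriv y t)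
    (hφ : φ ∈ Set.Ioo 0 π)
    (hφroot : t_p * b * Real.cos φ = (a * t_p - 1) * Real.sin φ) :
    (∀ ψ ∈ Set.Ioo 0 π, t_p * b * Real.cos ψ = (a * t_p - 1) * Real.sin ψ → ψ = φ) ∧
      v (1 + φ / b) =
        -Real.exp (-φ * a / b) * Real.sqrt (1 - 2 * a * t_p + t_p ^ 2 * (a ^ 2 + b ^ 2)) ∧
      deriv v (1 + φ / b) = 0 ∧
      ∀ t : ℝ, 1 ≤ t →
        v t ≥ -Real.exp (-φ * a / b) *
          Real.sqrt (1 - 2 * a * t_p + t_p ^ 2 * (a ^ 2 + b ^ 2)) := by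
  obtain ⟨hφ0, hφπ⟩ := hφ
  have ha' : 0 < a := by rw [ha]; positivity
  have hbpos : 0 < b := by
    rw [hb]
    have h1 : 0 < 4 * h_i * t_p - (1 + h) ^ 2 := by linarith
    positivity
  have hb' : b ≠ 0 := ne_of_gt hbpos
  set S : ℝ := 1 - 2 * a * t_p + t_p ^ 2 * (a ^ 2 + b ^ 2) with hS_def
  have hSpos : 0 < S := by
    rw [hS_def]
    nlinarith [sq_nonneg (1 - a*t_p), mul_pos (mul_pos htp htp) (mul_pos hbpos hbpos)]
  set s : ℝ := Real.sqrt S with hs_def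
  have hspos : 0 < s := Real.sqrt_pos.2 hSpos
  have hs2 : s^2 = S := Real.sq_sqrt (le_of_lt hSpos)
  have hsinφ : 0 < Real.sin φ := Real.sin_pos_of_pos_of_lt_pi hφ0 hφπ
  have e1 : Real.sin φ ^ 2 * S = (t_p*b)^2 := by
    linear_combination Real.sin φ^2 * hS_def
      - (t_p*b*Real.cos φ + (a*t_p-1)*Real.sin φ) * hφroot
      + (t_p*b)^2 * Real.sin_sq_add_cos_sq φ
  have hsin : Real.sin φ * s = t_p * b := by
    have h2 : (Real.sin φ * s)^2 = (t_p*b)^2 := by rw [mul_pow, hs2]; exact e1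
    have h3 : (Real.sin φ * s - t_p*b) * (Real.sin φ * s + t_p*b) = 0 := by linear_combination h2
    rcases mul_eq_zero.mp h3 with h4 | h4
    · linarith
    · nlinarith [mul_pos hsinφ hspos, mul_pos htp hbpos]
  have hcos : Real.cos φ * s = a * t_p - 1 := by
    have h4 : (Real.cos φ * s) * (t_p*b) = (a*t_p-1) * (t_p*b) := by
      linear_combination s * hφroot + (a*t_p-1) * hsin
    exact mul_right_cancel₀ (by positivity) h4
  -- uniqueness
  have uniq : ∀ ψ ∈ Set.Ioo 0 π, t_p * b * Real.cos ψ = (a * t_p - 1) * Real.sin ψ → ψ = φ := by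
    intro ψ hψ hψroot
    obtain ⟨hψ0, hψπ⟩ := hψ
    have h1 : Real.sin (φ - ψ) = 0 := by
      rw [Real.sin_sub]
      have h2 : t_p * b * (Real.sin φ * Real.cos ψ - Real.cos φ * Real.sin ψ) = 0 := by
        linear_combination Real.sin φ * hψroot - Real.sin ψ * hφroot
      rcases mul_eq_zero.mp h2 with h3 | h3
      · exact absurd h3 (by positivity)
      · exact h3
    have h3 := (Real.sin_eq_zero_iff_of_lt_of_lt (by linarith) (by linarith)).mp h1
    linarith
  -- derivative of y
  have yfun : y = fun t => Real.exp (-a*(t-1)) * (Real.cos (b*(t-1)) + (a/b) * Real.sin (b*(t-1))) :=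
    funext hy
  have hyd : ∀ t : ℝ, deriv y t =
      Real.exp (-a*(t-1)) * (-((a^2+b^2)/b) * Real.sin (b*(t-1))) := by
    intro t
    rw [yfun, (aux_deriv a b (a/b) t).deriv,
      show b*(a/b) - a = 0 by field_simp; ring,
      show -b - a*(a/b) = -((a^2+b^2)/b) by field_simp; ring]
    ring
  set c : ℝ := (a - t_p*(a^2+b^2))/b with hc_def
  have hcb : c * b = a - t_p*(a^2+b^2) := by rw [hc_def]; field_simp
  have hvf : ∀ t : ℝ, v t =
      Real.exp (-a*(t-1)) * (Real.cos (b*(t-1)) + c * Real.sin (b*(t-1))) := by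
    intro t
    rw [hv t, hy t, hyd t, hc_def]
    field_simp
    ring_nf
  have vfun : v = fun t => Real.exp (-a*(t-1)) * (Real.cos (b*(t-1)) + c * Real.sin (b*(t-1))) :=
    funext hvf
  have hvd : ∀ t : ℝ, deriv v t =
      Real.exp (-a*(t-1)) * ((b*c - a) * Real.cos (b*(t-1)) + (-b - a*c) * Real.sin (b*(t-1))) := by
    intro t; rw [vfun]; exact (aux_deriv a b c t).deriv
  have earg1 : -a * (1 + φ/b - 1) = -φ * a / b := by ring
  have earg2 : b * (1 + φ/b - 1) = φ := by field_simp; ring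
  refine ⟨uniq, ?_, ?_, ?_⟩
  · rw [hvf, earg1, earg2]
    have hkey : Real.cos φ + c * Real.sin φ = -s := by
      have h5 : (Real.cos φ + c * Real.sin φ) * s = -s * s := by
        linear_combination hcos + c * hsin + t_p * hcb + hs2 + hS_def
      exact mul_right_cancel₀ (ne_of_gt hspos) h5
    rw [hkey]; ring
  · rw [hvd, earg2]
    have hz : (b*c - a) * Real.cos φ + (-b - a*c) * Real.sin φ = 0 := by
      have h6 : ((b*c - a) * Real.cos φ + (-b - a*c) * Real.sin φ) * s = 0 * s := by
        linear_combination (b*c - a) * hcos + (-b - a*c) * hsin - hcb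
      exact mul_right_cancel₀ (ne_of_gt hspos) h6
    rw [hz, mul_zero]
  · intro t ht
    set u : ℝ := b*(t-1) - φ with hu_def
    have hu : -π ≤ u := by
      have h7 : 0 ≤ b*(t-1) := mul_nonneg (le_of_lt hbpos) (by linarith)
      rw [hu_def]; linarith
    have hkey2 := key_ineq a b ha' hbpos u hu
    have hA : (Real.cos (u+φ) + c * Real.sin (u+φ)) * (b*s)
        = -(S * (a*Real.sin u + b*Real.cos u)) := by
      rw [Real.sin_add, Real.cos_add]
      linear_combination (b*Real.cos u + c*b*Real.sin u) * hcos
        + (-b*Real.sin u + c*b*Real.cos u) * hsin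
        + ((a*t_p-1)*Real.sin u + t_p*b*Real.cos u) * hcb
        + (a*Real.sin u + b*Real.cos u) * hS_def
    have hexp : Real.exp (-a*(t-1)) = Real.exp (-φ*a/b) * Real.exp (-(a/b)*u) := by
      rw [← Real.exp_add]
      congr 1
      rw [hu_def]
      field_simp
      ring
    have step1 : Real.exp (-φ*a/b) * S * (Real.exp (-(a/b)*u) * (a*Real.sin u + b*Real.cos u))
        ≤ Real.exp (-φ*a/b) * S * b :=
      mul_le_mul_of_nonneg_left hkey2 (by positivity)
    have step2 : v t * (b*s)
        = -(Real.exp (-φ*a/b) * S * (Real.exp (-(a/b)*u) * (a*Real.sin u + b*Real.cos u))) := by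
      rw [hvf t, show b*(t-1) = u + φ by rw [hu_def]; ring, hexp]
      linear_combination (Real.exp (-φ*a/b) * Real.exp (-(a/b)*u)) * hA
    have step3 : (-Real.exp (-φ*a/b) * s) * (b*s) = -(Real.exp (-φ*a/b) * S * b) := by
      linear_combination (-(Real.exp (-φ*a/b) * b)) * hs2
    have step4 : (-Real.exp (-φ*a/b) * s) * (b*s) ≤ v t * (b*s) := by
      rw [step2, step3]
      linarith [step1]
    exact le_of_mul_le_mul_right step4 (by positivity)
end

section
/- Let a, b be real numbers with a ≠ 0 and b ≠ 0, and let y(t) = e^{−a(t−1)}(cos(b(t−1)) + (a/b)·sin(b(t−1))). Define F(t) = (e^{−2a(t−1)}/(4 a b^2 (a^2+b^2)))·(−(a^2+b^2)^2 + a^2(a^2 − 3 b^2)·cos(2 b (t−1)) + a b (−3 a^2 + b^2)·sin(2 b (t−1))). Then F'(t) = y(t)^2 for every real t; that is, F is an antiderivative of the squared error y^2. -/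
open Real

/-- The closed-form function `F` (denoted `ISE_a` in the paper) is an antiderivative of the
squared error `y²`, where `y(t) = e^{−a(t−1)}(cos(b(t−1)) + (a/b)·sin(b(t−1)))`. -/
theorem stmt6 (a b : ℝ) (y F : ℝ → ℝ) (ha : a ≠ 0) (hb : b ≠ 0)
    (hy : ∀ t : ℝ, y t =
      Real.exp (-a * (t - 1)) * (Real.cos (b * (t - 1)) + (a / b) * Real.sin (b * (t - 1))))
    (hF : ∀ t : ℝ, F t =
      (Real.exp (-2 * a * (t - 1)) / (4 * a * b ^ 2 * (a ^ 2 + b ^ 2))) *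
        (-(a ^ 2 + b ^ 2) ^ 2 + a ^ 2 * (a ^ 2 - 3 * b ^ 2) * Real.cos (2 * b * (t - 1))
          + a * b * (-3 * a ^ 2 + b ^ 2) * Real.sin (2 * b * (t - 1)))) :
    ∀ t : ℝ, deriv F t = (y t) ^ 2 := by
  have hFe : F = fun t : ℝ =>
      (Real.exp (-2 * a * (t - 1)) / (4 * a * b ^ 2 * (a ^ 2 + b ^ 2))) *
        (-(a ^ 2 + b ^ 2) ^ 2 + a ^ 2 * (a ^ 2 - 3 * b ^ 2) * Real.cos (2 * b * (t - 1))
          + a * b * (-3 * a ^ 2 + b ^ 2) * Real.sin (2 * b * (t - 1))) := funext hF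
  subst hFe
  intro t
  have h1 : HasDerivAt (fun t : ℝ => -2 * a * (t - 1)) (-2 * a) t := by
    simpa using ((hasDerivAt_id t).sub_const 1).const_mul (-2 * a)
  have h2 : HasDerivAt (fun t : ℝ => 2 * b * (t - 1)) (2 * b) t := by
    simpa using ((hasDerivAt_id t).sub_const 1).const_mul (2 * b)
  have hexp : HasDerivAt (fun t : ℝ => Real.exp (-2 * a * (t - 1)))
      (Real.exp (-2 * a * (t - 1)) * (-2 * a)) t := h1.exp
  have hcos : HasDerivAt (fun t : ℝ => Real.cos (2 * b * (t - 1)))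
      (-Real.sin (2 * b * (t - 1)) * (2 * b)) t := h2.cos
  have hsin : HasDerivAt (fun t : ℝ => Real.sin (2 * b * (t - 1)))
      (Real.cos (2 * b * (t - 1)) * (2 * b)) t := h2.sin
  have hD : HasDerivAt (fun t : ℝ =>
      (Real.exp (-2 * a * (t - 1)) / (4 * a * b ^ 2 * (a ^ 2 + b ^ 2))) *
        (-(a ^ 2 + b ^ 2) ^ 2 + a ^ 2 * (a ^ 2 - 3 * b ^ 2) * Real.cos (2 * b * (t - 1))
          + a * b * (-3 * a ^ 2 + b ^ 2) * Real.sin (2 * b * (t - 1))))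
      ((Real.exp (-2 * a * (t - 1)) * (-2 * a) / (4 * a * b ^ 2 * (a ^ 2 + b ^ 2))) *
        (-(a ^ 2 + b ^ 2) ^ 2 + a ^ 2 * (a ^ 2 - 3 * b ^ 2) * Real.cos (2 * b * (t - 1))
          + a * b * (-3 * a ^ 2 + b ^ 2) * Real.sin (2 * b * (t - 1)))
       + (Real.exp (-2 * a * (t - 1)) / (4 * a * b ^ 2 * (a ^ 2 + b ^ 2))) *
        (a ^ 2 * (a ^ 2 - 3 * b ^ 2) * (-Real.sin (2 * b * (t - 1)) * (2 * b))
          + a * b * (-3 * a ^ 2 + b ^ 2) * (Real.cos (2 * b * (t - 1)) * (2 * b)))) t := by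
    exact (hexp.div_const _).mul
      (((hcos.const_mul _).const_add _).add (hsin.const_mul _))
  rw [hD.deriv, hy]
  have hab : a ^ 2 + b ^ 2 ≠ 0 := by positivity
  have he2 : Real.exp (-a * (t - 1)) ^ 2 = Real.exp (-2 * a * (t - 1)) := by
    rw [sq, ← Real.exp_add]; ring_nf
  have hc2 : Real.cos (2 * b * (t - 1)) = 2 * Real.cos (b * (t - 1)) ^ 2 - 1 := by
    rw [show (2 : ℝ) * b * (t - 1) = 2 * (b * (t - 1)) by ring, Real.cos_two_mul]
  have hs2 : Real.sin (2 * b * (t - 1)) =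
      2 * Real.sin (b * (t - 1)) * Real.cos (b * (t - 1)) := by
    rw [show (2 : ℝ) * b * (t - 1) = 2 * (b * (t - 1)) by ring, Real.sin_two_mul]
  have hpyth := Real.sin_sq_add_cos_sq (b * (t - 1))
  rw [mul_pow, he2, hc2, hs2]
  field_simp
  have hpyth' : Real.sin ((t - 1) * b) ^ 2 + Real.cos ((t - 1) * b) ^ 2 = 1 := Real.sin_sq_add_cos_sq _
  linear_combination (-4 * a ^ 2 * (a ^ 2 + b ^ 2)) * hpyth'
end

section
/- Let t_p > 0, h_i ∈ ℝ and c > 0. Let y : [0, ∞) → ℝ be continuous, continuously differentiable on [1, ∞), with y(s) = c·e^{−s/t_p} for 0 ≤ s ≤ 1, and suppose that for every non-integer s > 1, y is twice differentiable at s and t_p·y''(s) + y'(s) = −h_i·y(s−1). Then for every integer n ≥ 1 there exist real polynomials P_n of degree at most n−1 and Q_n of degree at most n such that y(s) = P_n(s − n) + e^{−(s−n)/t_p}·Q_n(s − n) for all s ∈ [n, n+1]. -/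
open Polynomial Set Real Finset

noncomputable def psolve (t : ℝ) (A : Polynomial ℝ) : Polynomial ℝ :=
  ∑ k ∈ range (A.natDegree + 1), t ^ k • (⇑derivative)^[k] A

lemma psolve_spec (t : ℝ) (A : Polynomial ℝ) :
    psolve t A - t • derivative (psolve t A) = A := by
  unfold psolve
  rw [map_sum]
  have h1 : ∀ k, derivative (t ^ k • (⇑derivative)^[k] A)
      = t ^ k • (⇑derivative)^[k+1] A := by
    intro k
    rw [derivative_smul, Function.iterate_succ_apply']
  simp only [h1]
  rw [Finset.smul_sum]
  have h2 : ∀ k, t • t ^ k • (⇑derivative)^[k+1] A = t ^ (k+1) • (⇑derivative)^[k+1] A := by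
    intro k; rw [smul_smul, pow_succ, mul_comm]
  simp only [h2]
  rw [Finset.sum_range_succ' (fun k => t ^ k • (⇑derivative)^[k] A),
      Finset.sum_range_succ (fun k => t ^ (k+1) • (⇑derivative)^[k+1] A)]
  rw [Polynomial.iterate_derivative_eq_zero (by omega : A.natDegree < A.natDegree + 1)]
  simp

lemma psolve_degree (t : ℝ) (A : Polynomial ℝ) : (psolve t A).degree ≤ A.degree := by
  refine (Polynomial.degree_sum_le _ _).trans (Finset.sup_le fun k _ => ?_)
  refine (Polynomial.degree_smul_le _ _).trans ?_
  clear *- 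
  induction k with
  | zero => simp
  | succ m ih =>
    rw [Function.iterate_succ_apply']
    exact Polynomial.degree_derivative_le.trans ih

noncomputable def pint (D : Polynomial ℝ) : Polynomial ℝ :=
  ∑ k ∈ range (D.natDegree + 1), monomial (k+1) (D.coeff k / (k+1))

lemma pint_spec (D : Polynomial ℝ) : derivative (pint D) = D := by
  unfold pint
  rw [map_sum]
  simp only [derivative_monomial]
  have : ∀ k : ℕ, D.coeff k / (↑k+1) * (↑k+1) = D.coeff k := by
    intro k
    rw [div_mul_cancel₀]
    positivity
  push_cast
  simp only [this]
  exact (Polynomial.as_sum_range' D _ (by omega)).symm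

lemma pint_degree (D : Polynomial ℝ) : (pint D).degree ≤ D.degree + 1 := by
  rcases eq_or_ne D 0 with rfl | hD
  · simp [pint]
  · rw [Polynomial.degree_eq_natDegree hD]
    refine (Polynomial.degree_sum_le _ _).trans (Finset.sup_le fun k hk => ?_)
    refine (Polynomial.degree_monomial_le _ _).trans ?_
    simp only [Finset.mem_range] at hk
    have : ((k+1 : ℕ) : WithBot ℕ) ≤ ((D.natDegree + 1 : ℕ) : WithBot ℕ) :=
      Nat.cast_le.mpr (by omega)
    simpa using this

noncomputable def eform (t_p a : ℝ) (P Q : Polynomial ℝ) (s : ℝ) : ℝ :=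
  P.eval (s - a) + Real.exp (-(s - a) / t_p) * Q.eval (s - a)

lemma eform_hasDerivAt (t_p a : ℝ) (htp : t_p ≠ 0) (P Q : Polynomial ℝ) (s : ℝ) :
    HasDerivAt (eform t_p a P Q)
      (eform t_p a (derivative P) (derivative Q - t_p⁻¹ • Q) s) s := by
  have h1 : HasDerivAt (fun s : ℝ => s - a) 1 s := (hasDerivAt_id s).sub_const a
  have hP : HasDerivAt (fun s : ℝ => P.eval (s - a)) ((derivative P).eval (s - a)) s := by
    exact (P.hasDerivAt (s - a)).comp_sub_const s a
  have hQ : HasDerivAt (fun s : ℝ => Q.eval (s - a)) ((derivative Q).eval (s - a)) s := by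
    exact (Q.hasDerivAt (s - a)).comp_sub_const s a
  have hin : HasDerivAt (fun s : ℝ => -(s - a) / t_p) (-1 / t_p) s := by
    simpa using (h1.neg.div_const t_p)
  have hexp : HasDerivAt (fun s : ℝ => Real.exp (-(s - a) / t_p))
      (Real.exp (-(s - a) / t_p) * (-1 / t_p)) s := hin.exp
  have := hP.add (hexp.mul hQ)
  convert this using 1 <;> try rfl
  unfold eform
  simp only [Polynomial.eval_sub, Polynomial.eval_smul, smul_eq_mul]
  field_simp
  ring

lemma eform_continuous (t_p a : ℝ) (P Q : Polynomial ℝ) : Continuous (eform t_p a P Q) := by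
  unfold eform; fun_prop

/-- constancy on a closed interval from interior zero derivative -/
lemma const_of_deriv_zero {f : ℝ → ℝ} {a b : ℝ}
    (hcont : ContinuousOn f (Icc a b))
    (hder : ∀ x ∈ Ioo a b, HasDerivAt f 0 x) :
    ∀ x ∈ Icc a b, f x = f a := by
  have hdiff : DifferentiableOn ℝ f (interior (Icc a b)) := by
    rw [interior_Icc]; exact fun x hx => (hder x hx).differentiableAt.differentiableWithinAt
  have h0 : ∀ x ∈ interior (Icc a b), deriv f x = 0 := by
    rw [interior_Icc]; exact fun x hx => (hder x hx).deriv
  have hmono := monotoneOn_of_deriv_nonneg (convex_Icc a b) hcont hdiff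
    (fun x hx => (h0 x hx).ge)
  have hanti := antitoneOn_of_deriv_nonpos (convex_Icc a b) hcont hdiff
    (fun x hx => (h0 x hx).le)
  intro x hx
  have ha : a ∈ Icc a b := ⟨le_refl a, hx.1.trans hx.2⟩
  exact le_antisymm (hanti ha hx hx.1) (hmono ha hx hx.1)
lemma key (t_p h_i : ℝ) (y : ℝ → ℝ) (htp : 0 < t_p)
    (hcont : ContinuousOn y (Ici (0 : ℝ)))
    (hC1 : ContDiffOn ℝ 1 y (Ici (1 : ℝ)))
    (hdde : ∀ s : ℝ, 1 < s → (∀ m : ℤ, s ≠ (m : ℝ)) →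
      DifferentiableAt ℝ y s ∧ DifferentiableAt ℝ (deriv y) s ∧
        t_p * deriv (deriv y) s + deriv y s = -h_i * y (s - 1))
    (n : ℕ) (hn : 1 ≤ n) (A B : Polynomial ℝ)
    (hAB : ∀ s ∈ Icc ((n : ℝ) - 1) (n : ℝ),
      y s = A.eval (s - ((n : ℝ) - 1)) +
        Real.exp (-(s - ((n : ℝ) - 1)) / t_p) * B.eval (s - ((n : ℝ) - 1))) :
    ∃ P Q : Polynomial ℝ, P.degree ≤ max (A.degree + 1) 0 ∧
      Q.degree ≤ max (B.degree + 1) 0 ∧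
      ∀ s ∈ Icc (n : ℝ) ((n : ℝ) + 1), y s = eform t_p n P Q s := by
  have htp' : t_p ≠ 0 := htp.ne'
  have hn1 : (1 : ℝ) ≤ (n : ℝ) := by exact_mod_cast hn
  set D : Polynomial ℝ := psolve (-t_p) ((-h_i) • A) with hD
  set E : Polynomial ℝ := psolve t_p (h_i • B) with hE
  set P0 : Polynomial ℝ := pint D with hP0
  set Q0 : Polynomial ℝ := pint E with hQ0
  set Q1 : Polynomial ℝ := E - t_p⁻¹ • Q0 with hQ1
  have hcancel : ∀ p : Polynomial ℝ, t_p • t_p⁻¹ • p = p := fun p => by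
    rw [smul_smul, mul_inv_cancel₀ htp', one_smul]
  -- polynomial identities
  have hpA : t_p • derivative D + D = (-h_i) • A := by
    have h := psolve_spec (-t_p) ((-h_i) • A)
    rw [← hD] at h
    rw [show (-t_p) • derivative D = -(t_p • derivative D) from neg_smul _ _,
      sub_neg_eq_add, add_comm] at h
    exact h
  have hpB : t_p • (derivative Q1 - t_p⁻¹ • Q1) + Q1 = (-h_i) • B := by
    have h := psolve_spec t_p (h_i • B)
    rw [← hE] at h
    have h2 : t_p • derivative Q1 = t_p • derivative E - E := by
      rw [hQ1, hQ0, derivative_sub, derivative_smul, pint_spec, smul_sub, hcancel]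
    calc t_p • (derivative Q1 - t_p⁻¹ • Q1) + Q1
        = t_p • derivative Q1 - t_p • t_p⁻¹ • Q1 + Q1 := by rw [smul_sub]
      _ = t_p • derivative Q1 := by rw [hcancel, sub_add_cancel]
      _ = t_p • derivative E - E := h2
      _ = -(E - t_p • derivative E) := by abel
      _ = (-h_i) • B := by rw [h, neg_smul]
  -- derivative structure
  have hzd : ∀ s : ℝ, HasDerivAt (eform t_p n P0 Q0) (eform t_p n D Q1 s) s := by
    intro s
    have h := eform_hasDerivAt t_p n htp' P0 Q0 s
    rw [hP0, hQ0, pint_spec, pint_spec, ← hP0, ← hQ0, ← hQ1] at h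
    exact h
  have hzdd : ∀ s : ℝ, HasDerivAt (eform t_p n D Q1)
      (eform t_p n (derivative D) (derivative Q1 - t_p⁻¹ • Q1) s) s :=
    fun s => eform_hasDerivAt t_p n htp' D Q1 s
  -- the constructed function satisfies the ODE with the IH right-hand side
  have hODE : ∀ s : ℝ,
      t_p * eform t_p n (derivative D) (derivative Q1 - t_p⁻¹ • Q1) s + eform t_p n D Q1 s
        = -h_i * (A.eval (s - n) + Real.exp (-(s - n) / t_p) * B.eval (s - n)) := by
    intro s
    have eA := congrArg (Polynomial.eval (s - (n : ℝ))) hpA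
    have eB := congrArg (Polynomial.eval (s - (n : ℝ))) hpB
    simp only [Polynomial.eval_add, Polynomial.eval_smul, smul_eq_mul] at eA eB
    unfold eform
    linear_combination eA + Real.exp (-(s - (n : ℝ)) / t_p) * eB
  -- analytic setup
  set g : ℝ → ℝ := derivWithin y (Ici (1 : ℝ)) with hg
  have hgcont : ContinuousOn g (Ici (1 : ℝ)) :=
    hC1.continuousOn_derivWithin (uniqueDiffOn_Ici 1) le_rfl
  have hgeq : ∀ s : ℝ, 1 < s → g s = deriv y s := fun s hs =>
    derivWithin_of_mem_nhds (Ici_mem_nhds hs)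
  have hIsub : Icc (n : ℝ) ((n : ℝ) + 1) ⊆ Ici (1 : ℝ) := fun x hx => le_trans hn1 hx.1
  have hIsub0 : Icc (n : ℝ) ((n : ℝ) + 1) ⊆ Ici (0 : ℝ) := fun x hx => by
    have h1 := hx.1; simp only [Set.mem_Ici]; linarith
  -- facts on the open interval
  have hOfacts : ∀ s ∈ Ioo (n : ℝ) ((n : ℝ) + 1),
      (1 : ℝ) < s ∧ DifferentiableAt ℝ y s ∧ HasDerivAt g (deriv (deriv y) s) s ∧
        t_p * deriv (deriv y) s + deriv y s = -h_i * y (s - 1) := by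
    intro s hs
    have hs1 : (1 : ℝ) < s := lt_of_le_of_lt hn1 hs.1
    have hsint : ∀ m : ℤ, s ≠ (m : ℝ) := by
      intro m hm
      have h1' : (n : ℤ) < m := by exact_mod_cast hm ▸ hs.1
      have h2' : (m : ℝ) < ((n + 1 : ℤ) : ℝ) := by push_cast; exact hm ▸ hs.2
      have h2'' : m < (n : ℤ) + 1 := by exact_mod_cast h2'
      omega
    obtain ⟨hdy, hddy, hode⟩ := hdde s hs1 hsint
    refine ⟨hs1, hdy, ?_, hode⟩
    have hev : g =ᶠ[nhds s] deriv y := by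
      filter_upwards [Ioi_mem_nhds hs1] with t ht
      exact hgeq t ht
    exact (hddy.hasDerivAt).congr_of_eventuallyEq hev
  -- first constancy: v
  set v : ℝ → ℝ := fun s => Real.exp ((s - n) / t_p) * (g s - eform t_p n D Q1 s) with hv
  have hvcont : ContinuousOn v (Icc (n : ℝ) ((n : ℝ) + 1)) := by
    apply ContinuousOn.mul
    · exact (Real.continuous_exp.comp (by fun_prop)).continuousOn
    · exact (hgcont.mono hIsub).sub (eform_continuous t_p n D Q1).continuousOn
  have hvder : ∀ s ∈ Ioo (n : ℝ) ((n : ℝ) + 1), HasDerivAt v 0 s := by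
    intro s hs
    obtain ⟨hs1, hdy, hgd, hode⟩ := hOfacts s hs
    have hy1 : y (s - 1) = A.eval (s - n) + Real.exp (-(s - n) / t_p) * B.eval (s - n) := by
      have hmem : s - 1 ∈ Icc ((n : ℝ) - 1) (n : ℝ) :=
        ⟨by linarith [hs.1], by linarith [hs.2]⟩
      have h := hAB (s - 1) hmem
      have harg : s - 1 - ((n : ℝ) - 1) = s - n := by ring
      rw [harg] at h
      exact h
    have hexp : HasDerivAt (fun s : ℝ => Real.exp ((s - n) / t_p))
        (Real.exp ((s - n) / t_p) * (1 / t_p)) s := by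
      have hin : HasDerivAt (fun s : ℝ => (s - (n : ℝ)) / t_p) (1 / t_p) s := by
        simpa using ((hasDerivAt_id s).sub_const (n : ℝ)).div_const t_p
      exact hin.exp
    have hsum : HasDerivAt (fun s => g s - eform t_p n D Q1 s)
        (deriv (deriv y) s - eform t_p n (derivative D) (derivative Q1 - t_p⁻¹ • Q1) s) s :=
      hgd.sub (hzdd s)
    have hprod := hexp.mul hsum
    have hval : Real.exp ((s - n) / t_p) * (1 / t_p) * (g s - eform t_p n D Q1 s) +
        Real.exp ((s - n) / t_p) *
          (deriv (deriv y) s - eform t_p n (derivative D) (derivative Q1 - t_p⁻¹ • Q1) s) = 0 := by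
      have hE1 : t_p * deriv (deriv y) s + g s =
          t_p * eform t_p n (derivative D) (derivative Q1 - t_p⁻¹ • Q1) s
            + eform t_p n D Q1 s := by
        rw [hODE s, ← hy1, hgeq s hs1]
        exact hode
      have hdiff : g s - eform t_p n D Q1 s =
          -(t_p * (deriv (deriv y) s -
            eform t_p n (derivative D) (derivative Q1 - t_p⁻¹ • Q1) s)) := by linarith
      rw [hdiff]; field_simp; ring
    rw [hval] at hprod
    exact hprod
  have hvconst := const_of_deriv_zero hvcont hvder
  set K : ℝ := g n - eform t_p n D Q1 n with hK
  have hvn : v (n : ℝ) = K := by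
    show Real.exp (((n : ℝ) - (n : ℝ)) / t_p) * _ = _
    rw [sub_self, zero_div, Real.exp_zero, one_mul]
  have hg_eq : ∀ s ∈ Icc (n : ℝ) ((n : ℝ) + 1),
      g s = eform t_p n D Q1 s + K * Real.exp (-(s - n) / t_p) := by
    intro s hs
    have h := hvconst s hs
    rw [hvn] at h
    simp only [hv] at h
    have hne : Real.exp ((s - n) / t_p) ≠ 0 := Real.exp_ne_zero _
    have hinv : Real.exp (-(s - (n : ℝ)) / t_p) = (Real.exp ((s - n) / t_p))⁻¹ := by
      rw [neg_div, Real.exp_neg]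
    have h2 : g s - eform t_p n D Q1 s = K / Real.exp ((s - n) / t_p) := by
      rw [eq_div_iff hne, mul_comm]; exact h
    rw [hinv, ← div_eq_mul_inv, ← h2]; ring
  -- second stage
  set Qf : Polynomial ℝ := Q0 + Polynomial.C (-(t_p * K)) with hQf
  have hCs : t_p⁻¹ • (Polynomial.C (-(t_p * K)) : Polynomial ℝ) = Polynomial.C (-K) := by
    rw [Polynomial.smul_C]
    congr 1
    simp only [smul_eq_mul]
    field_simp
  have harg : derivative Qf - t_p⁻¹ • Qf = Q1 + Polynomial.C K := by
    calc derivative Qf - t_p⁻¹ • Qf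
        = derivative Q0 - (t_p⁻¹ • Q0 + Polynomial.C (-K)) := by
          rw [hQf, derivative_add, derivative_C, add_zero, smul_add, hCs]
      _ = (derivative Q0 - t_p⁻¹ • Q0) + Polynomial.C K := by rw [map_neg]; abel
      _ = Q1 + Polynomial.C K := by rw [hQ0, pint_spec, ← hQ0, ← hQ1]
  have hzf : ∀ s ∈ Icc (n : ℝ) ((n : ℝ) + 1),
      HasDerivAt (eform t_p n P0 Qf) (g s) s := by
    intro s hs
    have h := eform_hasDerivAt t_p n htp' P0 Qf s
    rw [harg, hP0, pint_spec, ← hP0] at h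
    have hval : eform t_p n D (Q1 + Polynomial.C K) s = g s := by
      rw [hg_eq s hs]
      unfold eform
      simp only [Polynomial.eval_add, Polynomial.eval_C]
      ring
    rw [hval] at h
    exact h
  set w : ℝ → ℝ := fun s => y s - eform t_p n P0 Qf s with hw
  have hwcont : ContinuousOn w (Icc (n : ℝ) ((n : ℝ) + 1)) :=
    (hcont.mono hIsub0).sub (eform_continuous t_p n P0 Qf).continuousOn
  have hwder : ∀ s ∈ Ioo (n : ℝ) ((n : ℝ) + 1), HasDerivAt w 0 s := by
    intro s hs
    obtain ⟨hs1, hdy, _, _⟩ := hOfacts s hs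
    have h := (hdy.hasDerivAt).sub (hzf s (Ioo_subset_Icc_self hs))
    have h0 : deriv y s - g s = 0 := by rw [hgeq s hs1]; ring
    rw [h0] at h
    exact h
  have hwconst := const_of_deriv_zero hwcont hwder
  refine ⟨P0 + Polynomial.C (y (n:ℝ) - eform t_p (n:ℝ) P0 Qf (n:ℝ)), Qf, ?_, ?_, ?_⟩
  · refine (Polynomial.degree_add_le _ _).trans (max_le_max ?_ Polynomial.degree_C_le)
    calc P0.degree ≤ D.degree + 1 := by rw [hP0]; exact pint_degree D
      _ ≤ ((-h_i) • A).degree + 1 := add_le_add_left (by rw [hD]; exact psolve_degree _ _) 1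
      _ ≤ A.degree + 1 := add_le_add_left (Polynomial.degree_smul_le _ _) 1
  · refine (Polynomial.degree_add_le _ _).trans (max_le_max ?_ Polynomial.degree_C_le)
    calc Q0.degree ≤ E.degree + 1 := by rw [hQ0]; exact pint_degree E
      _ ≤ (h_i • B).degree + 1 := add_le_add_left (by rw [hE]; exact psolve_degree _ _) 1
      _ ≤ B.degree + 1 := add_le_add_left (Polynomial.degree_smul_le _ _) 1
  · intro s hs
    have h := hwconst s hs
    simp only [hw] at h
    have : y s = eform t_p n P0 Qf s + (y (n : ℝ) - eform t_p n P0 Qf (n : ℝ)) := by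
      linarith [h]
    rw [this]
    unfold eform
    simp only [Polynomial.eval_add, Polynomial.eval_C, sub_self, neg_zero,
      zero_div, Real.exp_zero]
    ring


lemma maxdeg {d : WithBot ℕ} {a b : ℕ} (hd : d ≤ (a : WithBot ℕ)) (hab : a + 1 ≤ b) :
    max (d + 1) 0 ≤ (b : WithBot ℕ) := by
  apply max_le
  · calc d + 1 ≤ (a : WithBot ℕ) + 1 := add_le_add_left hd 1
      _ = ((a + 1 : ℕ) : WithBot ℕ) := by rw [Nat.cast_add, Nat.cast_one]
      _ ≤ ((b : ℕ) : WithBot ℕ) := by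
          rw [Nat.cast_withBot, Nat.cast_withBot]
          exact_mod_cast hab
  · rw [← Nat.cast_zero]
    rw [Nat.cast_withBot, Nat.cast_withBot]
    exact_mod_cast Nat.zero_le b

/-- Method of steps for the second operation mode of the proposed controller with a pure
exponential initial segment: the solution of `t_p y'' + y' = −h_i y(s−1)` with
`y(s) = c·e^{−s/t_p}` on `[0, 1]` is, on each interval `[n, n+1]`, a polynomial of degree
at most `n−1` plus `e^{−(s−n)/t_p}` times a polynomial of degree at most `n`. -/
theorem stmt11 (t_p h_i c : ℝ) (y : ℝ → ℝ)
    (htp : 0 < t_p) (hc : 0 < c)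
    (hcont : ContinuousOn y (Ici (0 : ℝ)))
    (hC1 : ContDiffOn ℝ 1 y (Ici (1 : ℝ)))
    (hist : ∀ s : ℝ, 0 ≤ s → s ≤ 1 → y s = c * Real.exp (-s / t_p))
    (hdde : ∀ s : ℝ, 1 < s → (∀ m : ℤ, s ≠ (m : ℝ)) →
      DifferentiableAt ℝ y s ∧ DifferentiableAt ℝ (deriv y) s ∧
        t_p * deriv (deriv y) s + deriv y s = -h_i * y (s - 1)) :
    ∀ n : ℕ, 1 ≤ n → ∃ P Q : Polynomial ℝ,
      P.degree ≤ ((n - 1 : ℕ) : WithBot ℕ) ∧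
      Q.degree ≤ (n : WithBot ℕ) ∧
      ∀ s ∈ Icc (n : ℝ) ((n : ℝ) + 1),
        y s = P.eval (s - (n : ℝ)) +
          Real.exp (-(s - (n : ℝ)) / t_p) * Q.eval (s - (n : ℝ)) := by
  intro n hn
  induction n, hn using Nat.le_induction with
  | base =>
    obtain ⟨P, Q, hP, hQ, hrep⟩ := key t_p h_i y htp hcont hC1 hdde 1 le_rfl 0 (Polynomial.C c)
      (by
        intro s hs
        simp only [Nat.cast_one] at hs
        have h0 : (0 : ℝ) ≤ s := by have := hs.1; linarith
        rw [hist s h0 hs.2]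
        simp only [Nat.cast_one, Polynomial.eval_zero, Polynomial.eval_C]
        rw [zero_add]
        have : (1 : ℝ) - 1 = 0 := by norm_num
        rw [this, sub_zero, mul_comm])
    refine ⟨P, Q, ?_, ?_, ?_⟩
    · refine hP.trans ?_
      simp
    · refine hQ.trans ?_
      have h1 : (Polynomial.C c).degree ≤ ((0 : ℕ) : WithBot ℕ) := by
        simpa using Polynomial.degree_C_le
      exact maxdeg h1 le_rfl
    · intro s hs
      have := hrep s (by exact_mod_cast hs)
      rw [this]
      simp only [Nat.cast_one]
      rfl
  | succ n hn ih =>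
    obtain ⟨P, Q, hP, hQ, hrep⟩ := ih
    obtain ⟨P', Q', hP', hQ', hrep'⟩ := key t_p h_i y htp hcont hC1 hdde (n + 1)
      (by omega) P Q
      (by
        intro s hs
        have hcst : ((n + 1 : ℕ) : ℝ) - 1 = (n : ℝ) := by push_cast; ring
        rw [hcst]
        refine hrep s ?_
        constructor
        · exact le_of_eq_of_le (by push_cast; ring) hs.1 |>.trans le_rfl |>.trans le_rfl
        · have := hs.2; push_cast at this ⊢; linarith)
    refine ⟨P', Q', ?_, ?_, ?_⟩
    · refine hP'.trans ?_
      have : n + 1 - 1 = n := by omega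
      rw [this]
      exact maxdeg hP (by omega)
    · exact hQ'.trans (maxdeg hQ (by omega))
    · intro s hs
      rw [hrep' s hs]
      rfl
end

section
/- Let t_p > 0. Then there exists a unique z_a ∈ (π/2, π) such that tan(z_a) = −(t_p/(1+t_p))·z_a; moreover z_a is the first positive solution of this equation, i.e., there is no solution z ∈ (0, π/2]. -/
open Real Set Filter Topology

/-- Existence and uniqueness of the ultimate frequency `z_a`: for `t_p > 0` there is a
unique `z_a ∈ (π/2, π)` with `tan z_a = −(t_p/(1+t_p))·z_a`, and there is no solution
in `(0, π/2]`, so `z_a` is the first positive solution. -/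
theorem stmt14 (t_p : ℝ) (htp : 0 < t_p) :
    (∃! z : ℝ, z ∈ Ioo (π / 2) π ∧ Real.tan z = -(t_p / (1 + t_p)) * z) ∧
      ∀ z ∈ Ioc (0 : ℝ) (π / 2), Real.tan z ≠ -(t_p / (1 + t_p)) * z := by
  have hπ := Real.pi_pos
  set c : ℝ := t_p / (1 + t_p) with hc
  have hc0 : 0 < c := div_pos htp (by linarith)
  set g : ℝ → ℝ := fun z => Real.tan z + c * z with hg
  -- tan on (π/2, π) via shift by π
  have hshift : ∀ x ∈ Ioo (π / 2) π, x - π ∈ Ioo (-(π / 2)) (π / 2) := by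
    rintro x ⟨h1, h2⟩; constructor <;> [linarith; linarith]
  have htan_eq : ∀ x : ℝ, Real.tan (x - π) = Real.tan x := fun x =>
    Real.tan_periodic.sub_eq x
  have hmono : StrictMonoOn g (Ioo (π / 2) π) := by
    intro x hx y hy hxy
    have h1 : Real.tan x < Real.tan y := by
      have := Real.strictMonoOn_tan (hshift x hx) (hshift y hy) (by linarith)
      rwa [htan_eq, htan_eq] at this
    have h2 : c * x < c * y := by nlinarith
    simp only [hg]; linarith
  -- continuity of g on [a, π] for a > π/2
  have hcont : ∀ a, π / 2 < a → ContinuousOn g (Icc a π) := by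
    intro a ha
    apply ContinuousOn.add _ (by fun_prop)
    intro z hz
    refine (Real.continuousAt_tan.2 ?_).continuousWithinAt
    have : Real.cos z < 0 :=
      Real.cos_neg_of_pi_div_two_lt_of_lt (lt_of_lt_of_le ha hz.1) (by linarith [hz.2])
    linarith
  -- g tends to atBot as z → π/2 from the right
  have htb : Tendsto g (𝓝[>] (π / 2)) atBot := by
    have h1 : Tendsto (fun z : ℝ => z - π) (𝓝[>] (π / 2)) (𝓝[>] (-(π / 2))) := by
      have : Tendsto (fun z : ℝ => z - π) (𝓝 (π / 2)) (𝓝 (π / 2 - π)) :=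
        (continuous_id.sub continuous_const).tendsto _
      have heq : π / 2 - π = -(π / 2) := by ring
      rw [heq] at this
      refine tendsto_nhdsWithin_of_tendsto_nhds_of_eventually_within _ (this.mono_left nhdsWithin_le_nhds) ?_
      filter_upwards [self_mem_nhdsWithin] with z hz
      simp only [mem_Ioi] at hz ⊢; linarith
    have h2 : Tendsto (fun z => Real.tan z) (𝓝[>] (π / 2)) atBot := by
      have := Real.tendsto_tan_neg_pi_div_two.comp h1
      simpa only [Function.comp_def, htan_eq] using this
    have h3 : Tendsto (fun z => c * z) (𝓝[>] (π / 2)) (𝓝 (c * (π / 2))) :=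
      ((continuous_const.mul continuous_id).tendsto _).mono_left nhdsWithin_le_nhds
    exact h2.atBot_add h3
  -- find a with g a < 0
  have hev : ∀ᶠ z in 𝓝[>] (π / 2), g z < 0 ∧ z ∈ Ioo (π / 2) π := by
    filter_upwards [htb.eventually (eventually_lt_atBot 0),
      Ioo_mem_nhdsGT_of_mem (⟨le_refl _, by linarith⟩ : π / 2 ∈ Ico (π / 2) π)] with z h1 h2
    exact ⟨h1, h2⟩
  obtain ⟨a, hga, ha⟩ := hev.exists
  have hgπ : 0 < g π := by
    simp only [hg]
    rw [Real.tan_pi]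
    positivity
  -- IVT on [a, π]
  have hivt : (0 : ℝ) ∈ g '' Ioo a π := by
    apply intermediate_value_Ioo ha.2.le (hcont a ha.1)
    exact ⟨hga, hgπ⟩
  obtain ⟨z, hz, hgz⟩ := hivt
  have hzmem : z ∈ Ioo (π / 2) π := ⟨lt_trans ha.1 hz.1, hz.2⟩
  have key : ∀ w, (Real.tan w = -c * w ↔ g w = 0) := by
    intro w; simp only [hg]; constructor <;> intro h <;> linarith
  constructor
  · refine ⟨z, ⟨hzmem, (key z).2 hgz⟩, ?_⟩
    rintro y ⟨hy, hty⟩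
    have hgy : g y = 0 := (key y).1 hty
    rcases lt_trichotomy y z with h | h | h
    · exact absurd (hmono hy hzmem h) (by rw [hgy, hgz]; simp)
    · exact h
    · exact absurd (hmono hzmem hy h) (by rw [hgy, hgz]; simp)
  · rintro w ⟨hw0, hw1⟩ heq
    rcases eq_or_lt_of_le hw1 with h | h
    · rw [h, Real.tan_pi_div_two] at heq
      nlinarith
    · have ht : 0 < Real.tan w := Real.tan_pos_of_pos_of_lt_pi_div_two hw0 h
      nlinarith
end
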